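/- Rewriting of the weighted multinomial sum: for positive reals a_1,...,a_r, w_1,...,w_r and natural n, ∑_{n_1+···+n_r=n} (n!/(n_1!···n_r!)) ∏_{j=1}^r w_j^{n_j}(a_j)_{n_j} = (a_r)_n w_r^n · ∑_{n_1+···+n_{r-1} ≤ n} [(-n)_m / (1-a_r-n)_m] ∏_{j=1}^{r-1} ((a_j)_{n_j}/n_j!) (w_j/w_r)^{n_j}, where m = n_1+···+n_{r-1}. -/

import Mathlib

lemma poch_neg_nat (n m : ℕ) :
    (ascPochhammer ℝ m).eval (-(n : ℝ)) = (-1)^m * (n.descFactorial m : ℝ) := by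
  rw [ascPochhammer_eval_neg_eq_descPochhammer, descPochhammer_eval_eq_descFactorial]

lemma poch_reflect (a : ℝ) (n m : ℕ) (h : m ≤ n) :
    (ascPochhammer ℝ m).eval (1 - a - (n : ℝ)) =
      (-1)^m * (ascPochhammer ℝ m).eval (a + ((n - m : ℕ) : ℝ)) := by
  have : (1 - a - (n:ℝ)) = -(a + n - 1) := by ring
  rw [this, ascPochhammer_eval_neg_eq_descPochhammer, descPochhammer_eval_eq_ascPochhammer]
  congr 2
  push_cast [h]
  ring

lemma poch_split (a : ℝ) (n m : ℕ) (h : m ≤ n) :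
    (ascPochhammer ℝ (n - m)).eval a * (ascPochhammer ℝ m).eval (a + ((n - m : ℕ) : ℝ)) =
      (ascPochhammer ℝ n).eval a := by
  have := congrArg (Polynomial.eval a) (ascPochhammer_mul ℝ (n - m) m)
  simpa [Nat.sub_add_cancel h, Polynomial.eval_comp] using this

theorem weighted_multinomial_rewrite (r n : ℕ)
    (a w : Fin (r + 1) → ℝ) (ha : ∀ j, 0 < a j) (hw : ∀ j, 0 < w j) :
    ∑ f ∈ Finset.Nat.antidiagonalTuple (r + 1) n,
        ((Nat.factorial n : ℝ) / ∏ j, (Nat.factorial (f j) : ℝ)) *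
          ∏ j, w j ^ f j * (ascPochhammer ℝ (f j)).eval (a j) =
      (ascPochhammer ℝ n).eval (a (Fin.last r)) * w (Fin.last r) ^ n *
        ∑ f ∈ (Fintype.piFinset fun _ : Fin r => Finset.range (n + 1)).filter
            (fun f => ∑ j, f j ≤ n),
          ((ascPochhammer ℝ (∑ j, f j)).eval (-(n : ℝ)) /
              (ascPochhammer ℝ (∑ j, f j)).eval (1 - a (Fin.last r) - (n : ℝ))) *
            ∏ j, ((ascPochhammer ℝ (f j)).eval (a j.castSucc) /
                (Nat.factorial (f j) : ℝ)) *
              (w j.castSucc / w (Fin.last r)) ^ f j := by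
  rw [Finset.mul_sum]
  refine Finset.sum_nbij' (fun g => g ∘ Fin.castSucc)
    (fun f => Fin.snoc f (n - ∑ j, f j)) ?_ ?_ ?_ ?_ ?_
  · intro g hg
    rw [Finset.Nat.mem_antidiagonalTuple] at hg
    rw [Fin.sum_univ_castSucc] at hg
    simp only [Finset.mem_filter, Fintype.mem_piFinset, Finset.mem_range, Function.comp]
    constructor
    · intro j
      have h2 : g j.castSucc ≤ ∑ i : Fin r, g i.castSucc :=
        Finset.single_le_sum (f := fun i : Fin r => g i.castSucc)
          (fun i _ => Nat.zero_le _) (Finset.mem_univ j)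
      omega
    · omega
  · intro f hf
    rw [Finset.mem_filter] at hf
    rw [Finset.Nat.mem_antidiagonalTuple, Fin.sum_univ_castSucc]
    simp only [Fin.snoc_castSucc, Fin.snoc_last]
    omega
  · intro g hg
    rw [Finset.Nat.mem_antidiagonalTuple, Fin.sum_univ_castSucc] at hg
    funext j
    refine Fin.lastCases ?_ ?_ j
    · simp only [Fin.snoc_last, Function.comp]
      omega
    · intro i; simp [Function.comp]
  · intro f hf
    funext j
    simp [Fin.snoc_castSucc, Function.comp]
  · intro g hg
    rw [Finset.Nat.mem_antidiagonalTuple, Fin.sum_univ_castSucc] at hg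
    set m := ∑ j : Fin r, g (Fin.castSucc j) with hm
    have hmn : m ≤ n := by omega
    have hlast : g (Fin.last r) = n - m := by omega
    have hsum : ∑ j : Fin r, (g ∘ Fin.castSucc) j = m := rfl
    rw [hsum]
    -- rewrite the pochhammer ratio
    rw [poch_neg_nat, poch_reflect _ _ _ hmn]
    -- split products over Fin (r+1)
    rw [Fin.prod_univ_castSucc (fun j => (Nat.factorial (g j) : ℝ)),
      Fin.prod_univ_castSucc (fun j => w j ^ g j * (ascPochhammer ℝ (g j)).eval (a j))]
    simp only [Function.comp, hlast]
    -- nonzeroness facts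
    have hwr : w (Fin.last r) ≠ 0 := (hw _).ne'
    have hfac : ∀ j : Fin r, ((g (Fin.castSucc j)).factorial : ℝ) ≠ 0 := fun j =>
      Nat.cast_ne_zero.mpr (Nat.factorial_ne_zero _)
    have hpochsplit := poch_split (a (Fin.last r)) n m hmn
    have hpochpos : 0 < (ascPochhammer ℝ (n - m)).eval (a (Fin.last r)) :=
      ascPochhammer_pos _ _ (ha _)
    have hpochpos2 : 0 < (ascPochhammer ℝ m).eval (a (Fin.last r) + ((n - m : ℕ) : ℝ)) := by
      exact ascPochhammer_pos _ _ (add_pos_of_pos_of_nonneg (ha _) (Nat.cast_nonneg _))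
    have hdesc : ((n - m).factorial : ℝ) * (n.descFactorial m : ℝ) = (n.factorial : ℝ) := by
      rw [← Nat.cast_mul, Nat.factorial_mul_descFactorial hmn]
    have hwpow : w (Fin.last r) ^ (n - m) * w (Fin.last r) ^ m = w (Fin.last r) ^ n := by
      rw [← pow_add]; congr 1; omega
    -- cancel the (-1)^m factor
    rw [mul_div_mul_left _ _ (pow_ne_zero m (by norm_num : (-1:ℝ) ≠ 0))]
    -- transform RHS products
    simp only [div_pow, div_mul_div_comm]
    simp only [Finset.prod_div_distrib, Finset.prod_mul_distrib, Finset.prod_pow_eq_pow_sum]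
    rw [← hm]
    have hc : ((n - m : ℕ) : ℝ) = (n : ℝ) - m := Nat.cast_sub hmn
    rw [hc] at hpochsplit hpochpos2
    have hZ : Polynomial.eval (a (Fin.last r) + ((n : ℝ) - m)) (ascPochhammer ℝ m) *
        ((∏ i : Fin r, ((g i.castSucc).factorial : ℝ)) * w (Fin.last r) ^ m) ≠ 0 :=
      mul_ne_zero hpochpos2.ne'
        (mul_ne_zero (Finset.prod_ne_zero_iff.mpr fun i _ => hfac i) (pow_ne_zero _ hwr))
    rw [hc]
    field_simp
    rw [← hpochsplit, ← hdesc, ← hwpow]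
    ring
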